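/- Let K ≥ 1 be an integer, τ ≥ 1, w ∈ ℝ^K, and fix an index k. Let z(t) ∈ ℝ^K be obtained from w by replacing the k-th coordinate with t (i.e., z(t)_k = t and z(t)_l = w_l for l ≠ k). Then lim_{t→∞} R_τ(z(t)) = 0; since R_τ ≥ 0 for τ ≥ 1, the regularizer attains its global minimum 0 in the limit where one logit coordinate tends to +∞. -/

import Mathlib

open Real Finset Filter

/-- Sparsity-oriented regularizer
`R_τ(z) = -log( (Σ_i exp z_i) / (Σ_i exp (z_i/τ))^τ )`. -/
noncomputable def regR {K : ℕ} (τ : ℝ) (z : Fin K → ℝ) : ℝ :=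
  - Real.log ((∑ i, Real.exp (z i)) / (∑ i, Real.exp (z i / τ)) ^ τ)

lemma aux_tendsto (C : ℝ) (hC : 0 ≤ C) :
    Tendsto (fun s : ℝ => Real.log (Real.exp s + C) - s) atTop (nhds 0) := by
  have heq : (fun s : ℝ => Real.log (Real.exp s + C) - s)
      = fun s : ℝ => Real.log (1 + C * Real.exp (-s)) := by
    funext s
    have h1 : Real.exp s + C = Real.exp s * (1 + C * Real.exp (-s)) := by
      rw [mul_add, mul_one, Real.exp_neg]
      field_simp
    have h2 : (0:ℝ) < 1 + C * Real.exp (-s) := by positivity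
    rw [h1, Real.log_mul (Real.exp_ne_zero s) (ne_of_gt h2), Real.log_exp]
    ring
  rw [heq]
  have h3 : Tendsto (fun s : ℝ => 1 + C * Real.exp (-s)) atTop (nhds 1) := by
    have := (tendsto_exp_neg_atTop_nhds_zero.const_mul C).const_add 1
    simpa using this
  have h4 := (Real.continuousAt_log one_ne_zero).tendsto.comp h3
  simpa [Function.comp_def] using h4

/-- for `τ ≥ 1`, sending the `k`-th logit coordinate to `+∞`
(with the others fixed) sends the regularizer to its global minimum `0`. -/
theorem stmt_11 {K : ℕ} (hK : 1 ≤ K) (τ : ℝ) (hτ : 1 ≤ τ)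
    (w : Fin K → ℝ) (k : Fin K) :
    Tendsto (fun t : ℝ => regR τ (Function.update w k t)) atTop (nhds 0) := by
  have hτ0 : (0:ℝ) < τ := lt_of_lt_of_le one_pos hτ
  set A : ℝ := ∑ i ∈ Finset.univ.erase k, Real.exp (w i) with hA
  set B : ℝ := ∑ i ∈ Finset.univ.erase k, Real.exp (w i / τ) with hB
  have hA0 : 0 ≤ A := Finset.sum_nonneg fun i _ => (Real.exp_pos _).le
  have hB0 : 0 ≤ B := Finset.sum_nonneg fun i _ => (Real.exp_pos _).le
  have hS : ∀ t : ℝ, (∑ i, Real.exp (Function.update w k t i)) = Real.exp t + A := by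
    intro t
    have : (fun i => Real.exp (Function.update w k t i))
        = Function.update (fun i => Real.exp (w i)) k (Real.exp t) := by
      funext i
      by_cases h : i = k
      · subst h; simp
      · simp [h]
    rw [this, Finset.sum_update_of_mem (Finset.mem_univ k)]
    simp [hA, Finset.erase_eq]
  have hT : ∀ t : ℝ, (∑ i, Real.exp (Function.update w k t i / τ)) = Real.exp (t / τ) + B := by
    intro t
    have : (fun i => Real.exp (Function.update w k t i / τ))
        = Function.update (fun i => Real.exp (w i / τ)) k (Real.exp (t / τ)) := by
      funext i
      by_cases h : i = k
      · subst h; simp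
      · simp [h]
    rw [this, Finset.sum_update_of_mem (Finset.mem_univ k)]
    simp [hB, Finset.erase_eq]
  have hreg : ∀ t : ℝ, regR τ (Function.update w k t)
      = τ * Real.log (Real.exp (t / τ) + B) - Real.log (Real.exp t + A) := by
    intro t
    have hSpos : (0:ℝ) < Real.exp t + A := by positivity
    have hTpos : (0:ℝ) < Real.exp (t / τ) + B := by positivity
    simp only [regR, hS t, hT t]
    rw [Real.log_div (ne_of_gt hSpos) (ne_of_gt (Real.rpow_pos_of_pos hTpos τ)),
      Real.log_rpow hTpos]
    ring
  have key : Tendsto (fun t : ℝ =>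
      τ * Real.log (Real.exp (t / τ) + B) - Real.log (Real.exp t + A)) atTop (nhds 0) := by
    have h1 : Tendsto (fun t : ℝ => t / τ) atTop atTop :=
      tendsto_id.atTop_div_const hτ0
    have h2 : Tendsto (fun t : ℝ => Real.log (Real.exp (t / τ) + B) - t / τ)
        atTop (nhds 0) := (aux_tendsto B hB0).comp h1
    have h3 := (h2.const_mul τ).sub (aux_tendsto A hA0)
    have heq : (fun t : ℝ =>
        τ * Real.log (Real.exp (t / τ) + B) - Real.log (Real.exp t + A))
        = fun t : ℝ => τ * (Real.log (Real.exp (t / τ) + B) - t / τ)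
          - (Real.log (Real.exp t + A) - t) := by
      funext t
      field_simp
      ring
    rw [heq]
    simpa using h3
  refine key.congr fun t => ?_
  rw [hreg t]
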